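/- Let γ ∈ (0, 1/2) ∪ (1/2, 1) and θ > 0. There exists a constant C > 0 depending only on θ and γ such that for all 0 < s < t with t - s > 2, e^{-θt} e^{-θs} ∫_s^t ∫_0^s e^{θx} e^{θy} (y-x)^{2γ-2} dx dy ≤ C (t-s)^{2γ-2}. -/

import Mathlib

open MeasureTheory Real Set


lemma int_exp_le {θ a b : ℝ} (hθ : 0 < θ) (hab : a ≤ b) :
    ∫ x in Icc a b, Real.exp (θ*x) ≤ Real.exp (θ*b)/θ := by
  rw [MeasureTheory.integral_Icc_eq_integral_Ioc, ← intervalIntegral.integral_of_le hab,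
    intervalIntegral.integral_comp_mul_left (fun x => Real.exp x) hθ.ne', integral_exp,
    smul_eq_mul, div_eq_inv_mul]
  have : Real.exp (θ*b) - Real.exp (θ*a) ≤ Real.exp (θ*b) := by
    have := Real.exp_pos (θ*a); linarith
  exact mul_le_mul_of_nonneg_left this (by positivity)

lemma exp_neg_le {θ T : ℝ} (hθ : 0 < θ) (hT : 0 < T) :
    Real.exp (-(θ*T/2)) * T^3 ≤ 384 / (θ^4 * T) := by
  have h1 : (θ*T/2)^4/24 ≤ Real.exp (θ*T/2) := by
    have h := Real.sum_le_exp_of_nonneg (x := θ*T/2) (by positivity) 5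
    calc (θ*T/2)^4/24 = (θ*T/2)^4/(Nat.factorial 4) := by norm_num [Nat.factorial]
    _ ≤ ∑ i ∈ Finset.range 5, (θ*T/2)^i / (Nat.factorial i) :=
        Finset.single_le_sum (f := fun i => (θ*T/2)^i / (Nat.factorial i)) (fun i _ => by positivity) (by norm_num)
    _ ≤ Real.exp (θ*T/2) := h
  have h1' : (θ*T/2)^4 ≤ Real.exp (θ*T/2) * 24 := by
    rw [div_le_iff₀ (by norm_num : (0:ℝ) < 24)] at h1; linarith
  have h2 : Real.exp (-(θ*T/2)) * (θ*T/2)^4 ≤ 24 := by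
    calc Real.exp (-(θ*T/2)) * (θ*T/2)^4 ≤ Real.exp (-(θ*T/2)) * (Real.exp (θ*T/2) * 24) :=
          mul_le_mul_of_nonneg_left h1' (Real.exp_pos _).le
    _ = 24 := by rw [← mul_assoc, ← Real.exp_add]; simp
  rw [le_div_iff₀ (by positivity)]
  nlinarith [h2, Real.exp_pos (-(θ*T/2))]


lemma contOn_aux {p s y : ℝ} (hy : s < y) :
    ContinuousOn (fun x : ℝ => (y-x)^p) (Icc 0 s) := by
  apply ContinuousOn.rpow_const (by fun_prop)
  intro x hx
  exact Or.inl (by have := hx.2; intro h; nlinarith [sub_eq_zero.mp h])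

lemma inner_integrable {θ p s y : ℝ} (hy : s < y) :
    IntegrableOn (fun x : ℝ => Real.exp (θ*x) * Real.exp (θ*y) * (y-x)^p) (Icc 0 s) := by
  apply ContinuousOn.integrableOn_Icc
  exact (((Real.continuous_exp.comp (continuous_const.mul continuous_id)).continuousOn).mul
    continuousOn_const).mul (contOn_aux hy)

lemma innerA {θ p s y c : ℝ} (hθ : 0 < θ) (hs : 0 ≤ s) (hy : s < y) (hc : 0 < c)
    (hcy : c ≤ y - s) (hp : p ≤ 0) :
    ∫ x in Icc 0 s, Real.exp (θ*x) * Real.exp (θ*y) * (y-x)^p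
      ≤ Real.exp (θ*y) * (Real.exp (θ*s)/θ * c^p) := by
  have step1 : ∫ x in Icc 0 s, Real.exp (θ*x) * Real.exp (θ*y) * (y-x)^p
      ≤ ∫ x in Icc 0 s, Real.exp (θ*x) * (Real.exp (θ*y) * c^p) := by
    refine setIntegral_mono_on (inner_integrable hy) ?_ measurableSet_Icc ?_
    · exact (((Real.continuous_exp.comp (continuous_const.mul continuous_id)).mul
        continuous_const)).continuousOn.integrableOn_Icc
    · intro x hx
      have h1 : (y-x)^p ≤ c^p :=
        Real.rpow_le_rpow_of_nonpos hc (by have := hx.2; linarith) hp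
      calc Real.exp (θ*x) * Real.exp (θ*y) * (y-x)^p
          ≤ Real.exp (θ*x) * Real.exp (θ*y) * c^p := by
            apply mul_le_mul_of_nonneg_left h1 (by positivity)
        _ = Real.exp (θ*x) * (Real.exp (θ*y) * c^p) := by ring
  refine step1.trans ?_
  rw [MeasureTheory.integral_mul_const]
  have h2 : ∫ x in Icc 0 s, Real.exp (θ*x) ≤ Real.exp (θ*s)/θ := int_exp_le hθ hs
  calc (∫ x in Icc 0 s, Real.exp (θ*x)) * (Real.exp (θ*y) * c^p)
      ≤ Real.exp (θ*s)/θ * (Real.exp (θ*y) * c^p) := by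
        apply mul_le_mul_of_nonneg_right h2 (by positivity)
    _ = Real.exp (θ*y) * (Real.exp (θ*s)/θ * c^p) := by ring

lemma innerB_lt {θ γ s y : ℝ} (hθ : 0 < θ) (hγ0 : 0 < γ) (hγ : γ < 1/2) (hs : 0 ≤ s)
    (hy : s < y) :
    ∫ x in Icc 0 s, Real.exp (θ*x) * Real.exp (θ*y) * (y-x)^(2*γ-2)
      ≤ Real.exp (θ*y) * (Real.exp (θ*s) * ((y-s)^(2*γ-1)/(1-2*γ))) := by
  have step1 : ∫ x in Icc 0 s, Real.exp (θ*x) * Real.exp (θ*y) * (y-x)^(2*γ-2)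
      ≤ ∫ x in Icc 0 s, (Real.exp (θ*s) * Real.exp (θ*y)) * (y-x)^(2*γ-2) := by
    refine setIntegral_mono_on (inner_integrable hy) ?_ measurableSet_Icc ?_
    · exact (continuousOn_const.mul (contOn_aux hy)).integrableOn_Icc
    · intro x hx
      have h0 : (0:ℝ) ≤ (y-x)^(2*γ-2) :=
        Real.rpow_nonneg (by have := hx.2; linarith) _
      have : Real.exp (θ*x) ≤ Real.exp (θ*s) :=
        Real.exp_le_exp.mpr (mul_le_mul_of_nonneg_left hx.2 hθ.le)
      exact mul_le_mul_of_nonneg_right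
        (mul_le_mul_of_nonneg_right this (Real.exp_pos (θ*y)).le) h0
  refine step1.trans ?_
  have hpull : ∫ x in Icc 0 s, Real.exp (θ*s) * Real.exp (θ*y) * (y-x)^(2*γ-2)
      = (Real.exp (θ*s) * Real.exp (θ*y)) * ∫ x in Icc 0 s, (y-x)^(2*γ-2) := by
    simp_rw [mul_assoc]
    rw [MeasureTheory.integral_const_mul, MeasureTheory.integral_const_mul]
  rw [hpull]
  have hcomp : ∫ x in Icc 0 s, (y-x)^(2*γ-2) = (y^(2*γ-1) - (y-s)^(2*γ-1))/(2*γ-1) := by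
    rw [MeasureTheory.integral_Icc_eq_integral_Ioc, ← intervalIntegral.integral_of_le hs,
      intervalIntegral.integral_comp_sub_left (fun u : ℝ => u^(2*γ-2)) y]
    rw [integral_rpow (Or.inr ⟨by intro h; linarith [h], by
      rw [Set.mem_uIcc]; push_neg
      constructor
      · intro h; linarith
      · intro h; linarith⟩)]
    rw [show 2*γ-2+1 = 2*γ-1 by ring]
    norm_num
  rw [hcomp]
  have hys : (0:ℝ) < y - s := by linarith
  have h1 : (0:ℝ) ≤ y^(2*γ-1) := Real.rpow_nonneg (by linarith) _
  have h2 : (y^(2*γ-1) - (y-s)^(2*γ-1))/(2*γ-1) ≤ (y-s)^(2*γ-1)/(1-2*γ) := by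
    have heq : (y^(2*γ-1) - (y-s)^(2*γ-1))/(2*γ-1) = ((y-s)^(2*γ-1) - y^(2*γ-1))/(1-2*γ) := by
      rw [div_eq_div_iff (by linarith) (by linarith)]; ring
    rw [heq]
    gcongr
    · linarith
    · linarith
  calc Real.exp (θ*s) * Real.exp (θ*y) * ((y^(2*γ-1) - (y-s)^(2*γ-1))/(2*γ-1))
      ≤ Real.exp (θ*s) * Real.exp (θ*y) * ((y-s)^(2*γ-1)/(1-2*γ)) := by
        apply mul_le_mul_of_nonneg_left h2 (by positivity)
    _ = Real.exp (θ*y) * (Real.exp (θ*s) * ((y-s)^(2*γ-1)/(1-2*γ))) := by ring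

lemma f0_integrable {θ q : ℝ} (hθ : 0 < θ) (hq : -1 < q) :
    IntegrableOn (fun u : ℝ => Real.exp (-(θ*u)) * u^q) (Ioi 0) := by
  have base : IntegrableOn (fun x : ℝ => Real.exp (-x) * x^(q+1-1)) (Ioi 0) :=
    Real.GammaIntegral_convergent (by linarith)
  have h1 : IntegrableOn (fun u : ℝ => Real.exp (-(θ*u)) * (θ*u)^(q+1-1)) (Ioi 0) := by
    have := (integrableOn_Ioi_comp_mul_left_iff
      (fun x : ℝ => Real.exp (-x) * x^(q+1-1)) 0 hθ).2 (by simpa using base)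
    simpa using this
  have h2 : IntegrableOn (fun u : ℝ => (θ^q)⁻¹ * (Real.exp (-(θ*u)) * (θ*u)^(q+1-1))) (Ioi 0) :=
    h1.const_mul (θ^q)⁻¹
  refine IntegrableOn.congr_fun h2 (fun u hu => ?_) measurableSet_Ioi
  have hu0 : (0:ℝ) < u := hu
  have hθq : θ^q ≠ 0 := (Real.rpow_pos_of_pos hθ q).ne'
  rw [show q+1-1 = q by ring, Real.mul_rpow hθ.le hu0.le]
  field_simp

lemma f0_bound {θ q s : ℝ} (hθ : 0 < θ) (hq : -1 < q) :
    ∫ u in Ioc 0 s, Real.exp (-(θ*u)) * u^q ≤ (1/θ)^(q+1) * Real.Gamma (q+1) := by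
  have hval : ∫ u in Ioi 0, Real.exp (-(θ*u)) * u^q = (1/θ)^(q+1) * Real.Gamma (q+1) := by
    rw [← Real.integral_rpow_mul_exp_neg_mul_Ioi (by linarith : (0:ℝ) < q+1) hθ]
    refine setIntegral_congr_fun measurableSet_Ioi (fun u hu => ?_)
    rw [show q+1-1 = q by ring]; ring
  rw [← hval]
  refine setIntegral_mono_set (f0_integrable hθ hq) ?_ ?_
  · refine (ae_restrict_iff' measurableSet_Ioi).2 (Filter.Eventually.of_forall (fun u hu => ?_))
    have : (0:ℝ) < u := hu
    positivity
  · exact (Ioc_subset_Ioi_self).eventuallyLE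

lemma innerB_gt {θ γ s y : ℝ} (hθ : 0 < θ) (hγ : 1/2 < γ) (hγ1 : γ < 1) (hs : 0 ≤ s) (hy : s < y) :
    ∫ x in Icc 0 s, Real.exp (θ*x) * Real.exp (θ*y) * (y-x)^(2*γ-2)
      ≤ Real.exp (θ*y) * (Real.exp (θ*s) * ((1/θ)^(2*γ-1) * Real.Gamma (2*γ-1))) := by
  have hq : (-1:ℝ) < 2*γ-2 := by linarith
  have hf0 : IntegrableOn (fun u : ℝ => Real.exp (-(θ*u)) * u^(2*γ-2)) (Ioc 0 s) :=
    (f0_integrable hθ hq).mono_set Ioc_subset_Ioi_self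
  have hii : IntervalIntegrable (fun u : ℝ => Real.exp (-(θ*u)) * u^(2*γ-2)) volume 0 s :=
    (intervalIntegrable_iff_integrableOn_Ioc_of_le hs).2 hf0
  have hii2 : IntervalIntegrable (fun x : ℝ => Real.exp (-(θ*(s-x))) * (s-x)^(2*γ-2))
      volume 0 s := by simpa using (hii.comp_sub_left s).symm
  have hint2 : IntegrableOn (fun x : ℝ => Real.exp (-(θ*(s-x))) * (s-x)^(2*γ-2)) (Icc 0 s) :=
    (intervalIntegrable_iff_integrableOn_Icc_of_le hs).1 hii2
  -- step 1 : a.e. bound on Icc 0 s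
  have step1 : ∫ x in Icc 0 s, Real.exp (θ*x) * Real.exp (θ*y) * (y-x)^(2*γ-2)
      ≤ ∫ x in Icc 0 s, (Real.exp (θ*s) * Real.exp (θ*y)) *
          (Real.exp (-(θ*(s-x))) * (s-x)^(2*γ-2)) := by
    refine integral_mono_of_nonneg ?_ ((hint2.const_mul _)) ?_
    · refine (ae_restrict_iff' measurableSet_Icc).2 (Filter.Eventually.of_forall (fun x hx => ?_))
      have : (0:ℝ) < y - x := by have := hx.2; linarith
      positivity
    · have hae : ∀ᵐ x : ℝ, x ≠ s := by
        have : (volume : Measure ℝ) {s} = 0 := Real.volume_singleton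
        simpa [ae_iff] using this
      have h2 : ∀ᵐ x ∂(volume.restrict (Icc (0:ℝ) s)), x ≠ s :=
        hae.filter_mono (MeasureTheory.ae_mono Measure.restrict_le_self)
      have h3 : ∀ᵐ x ∂(volume.restrict (Icc (0:ℝ) s)), x ∈ Icc (0:ℝ) s :=
        ae_restrict_mem measurableSet_Icc
      filter_upwards [h2, h3] with x hxs hxm
      have hxlt : x < s := lt_of_le_of_ne hxm.2 hxs
      have hsx : (0:ℝ) < s - x := by linarith
      have hrp : (y-x)^(2*γ-2) ≤ (s-x)^(2*γ-2) :=
        Real.rpow_le_rpow_of_nonpos hsx (by linarith) (by linarith)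
      have hex : Real.exp (θ*s) * Real.exp (-(θ*(s-x))) = Real.exp (θ*x) := by
        rw [← Real.exp_add]; ring_nf
      calc Real.exp (θ*x) * Real.exp (θ*y) * (y-x)^(2*γ-2)
          ≤ Real.exp (θ*x) * Real.exp (θ*y) * (s-x)^(2*γ-2) :=
            mul_le_mul_of_nonneg_left hrp (by positivity)
        _ = Real.exp (θ*s) * Real.exp (θ*y) * (Real.exp (-(θ*(s-x))) * (s-x)^(2*γ-2)) := by
            rw [← hex]; ring
  refine step1.trans ?_
  rw [MeasureTheory.integral_const_mul]
  have hsub : ∫ x in Icc (0:ℝ) s, Real.exp (-(θ*(s-x))) * (s-x)^(2*γ-2)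
      = ∫ u in Ioc (0:ℝ) s, Real.exp (-(θ*u)) * u^(2*γ-2) := by
    rw [MeasureTheory.integral_Icc_eq_integral_Ioc, ← intervalIntegral.integral_of_le hs,
      intervalIntegral.integral_comp_sub_left
        (fun u : ℝ => Real.exp (-(θ*u)) * u^(2*γ-2)) s]
    simp [intervalIntegral.integral_of_le hs]
  rw [hsub]
  have hb := f0_bound (s := s) hθ hq
  rw [show 2*γ-2+1 = 2*γ-1 by ring] at hb
  calc Real.exp (θ*s) * Real.exp (θ*y) * ∫ u in Ioc (0:ℝ) s, Real.exp (-(θ*u)) * u^(2*γ-2)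
      ≤ Real.exp (θ*s) * Real.exp (θ*y) * ((1/θ)^(2*γ-1) * Real.Gamma (2*γ-1)) :=
        mul_le_mul_of_nonneg_left hb (by positivity)
    _ = Real.exp (θ*y) * (Real.exp (θ*s) * ((1/θ)^(2*γ-1) * Real.Gamma (2*γ-1))) := by ring

lemma exp_cube_le {θ T : ℝ} (hθ : 0 < θ) (hT : 2 ≤ T) :
    Real.exp (-(θ*T/2)) * T^3 ≤ 192/θ^4 := by
  refine (exp_neg_le hθ (by linarith)).trans ?_
  rw [div_le_div_iff₀ (by positivity) (by positivity)]
  nlinarith [pow_pos hθ 4]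

lemma exp_sq_le {θ T : ℝ} (hθ : 0 < θ) (hT : 2 ≤ T) :
    Real.exp (-(θ*T/2)) * T^2 ≤ 96/θ^4 := by
  have he := Real.exp_pos (-(θ*T/2))
  have hT3 : 2*T^2 ≤ T^3 := by nlinarith
  have h1 : Real.exp (-(θ*T/2)) * T^2 ≤ (Real.exp (-(θ*T/2)) * T^3)/2 := by
    rw [show Real.exp (-(θ*T/2)) * T^2 = (Real.exp (-(θ*T/2)) * (2*T^2))/2 by ring]
    gcongr
  refine h1.trans ?_
  have h2 := exp_cube_le hθ hT
  have h3 : (192/θ^4:ℝ)/2 = 96/θ^4 := by ring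
  linarith

lemma half_rpow_le {T p : ℝ} (hT : 0 < T) (hp : -2 ≤ p) (hp0 : p ≤ 0) :
    (T/2)^p ≤ 4 * T^p := by
  rw [Real.div_rpow hT.le (by norm_num : (0:ℝ) ≤ 2)]
  have h24 : (2:ℝ)^(-2:ℝ) = 1/4 := by
    rw [show (-2:ℝ) = ((-2:ℤ):ℝ) by norm_num, Real.rpow_intCast]; norm_num
  have h1 : (1/4:ℝ) ≤ (2:ℝ)^p := by
    rw [← h24]; exact Real.rpow_le_rpow_of_exponent_le (by norm_num) hp
  have h2 : T^p/(2:ℝ)^p ≤ T^p/(1/4) :=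
    div_le_div_of_nonneg_left (Real.rpow_nonneg hT.le p) (by norm_num) h1
  calc T^p/(2:ℝ)^p ≤ T^p/(1/4) := h2
    _ = 4 * T^p := by ring

lemma main_aux {θ γ : ℝ} (hθ : 0 < θ) (hγ1 : γ < 1) {s t : ℝ} (hs : 0 < s)
    (hst : s < t) (hT : t - s > 2) (ψ : ℝ → ℝ) (Rψ : ℝ) (hψ0 : ∀ y ∈ Icc s t, 0 ≤ ψ y)
    (hψint : IntegrableOn ψ (Icc s t))
    (hψle : ∀ y, s < y → y ≤ t →
      (∫ x in Icc (0:ℝ) s, Real.exp (θ*x) * Real.exp (θ*y) * (y-x)^(2*γ-2))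
        ≤ Real.exp (θ*y) * ψ y)
    (hψtot : ∫ y in Icc s t, ψ y ≤ Rψ) :
    Real.exp (-θ*t) * Real.exp (-θ*s) *
      ∫ y in Icc s t, ∫ x in Icc (0:ℝ) s,
        Real.exp (θ*x) * Real.exp (θ*y) * (y-x)^(2*γ-2)
    ≤ ((t-s)/2)^(2*γ-2)/θ^2
      + Real.exp (-(θ*(t-s)/2)) * (Real.exp (-(θ*s)) * Rψ) := by
  set T := t - s with hTdef
  have hT0 : (0:ℝ) < T := by simp only [hTdef]; linarith
  set G1 : ℝ → ℝ := fun y => Real.exp (θ*y) * (Real.exp (θ*s)/θ * (T/2)^(2*γ-2)) with hG1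
  set G2 : ℝ → ℝ := fun y => Real.exp (θ*(s+T/2)) * ψ y with hG2
  have hG1int : IntegrableOn G1 (Icc s t) := by
    apply ContinuousOn.integrableOn_Icc
    exact ((Real.continuous_exp.comp (continuous_const.mul continuous_id)).continuousOn).mul
      continuousOn_const
  have hG2int : IntegrableOn G2 (Icc s t) := hψint.const_mul _
  have step1 : (∫ y in Icc s t, ∫ x in Icc (0:ℝ) s,
      Real.exp (θ*x) * Real.exp (θ*y) * (y-x)^(2*γ-2))
      ≤ ∫ y in Icc s t, (G1 y + G2 y) := by
    have hae : ∀ᵐ y : ℝ, y ≠ s := by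
      have : (volume : Measure ℝ) {s} = 0 := Real.volume_singleton
      simpa [ae_iff] using this
    have h2 : ∀ᵐ y ∂(volume.restrict (Icc s t)), y ≠ s :=
      hae.filter_mono (MeasureTheory.ae_mono Measure.restrict_le_self)
    have h3 : ∀ᵐ y ∂(volume.restrict (Icc s t)), y ∈ Icc s t :=
      ae_restrict_mem measurableSet_Icc
    refine integral_mono_of_nonneg ?_ (hG1int.add hG2int) ?_
    · filter_upwards [h2, h3] with y hys hym
      have hsy : s < y := lt_of_le_of_ne hym.1 (Ne.symm hys)
      refine setIntegral_nonneg measurableSet_Icc (fun x hx => ?_)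
      have : (0:ℝ) < y - x := by have := hx.2; linarith
      positivity
    · filter_upwards [h2, h3] with y hys hym
      have hsy : s < y := lt_of_le_of_ne hym.1 (Ne.symm hys)
      have hG20 : 0 ≤ G2 y := by
        simp only [hG2]; exact mul_nonneg (Real.exp_pos _).le (hψ0 y hym)
      have hG10 : 0 ≤ G1 y := by
        simp only [hG1]
        have : (0:ℝ) ≤ (T/2)^(2*γ-2) := Real.rpow_nonneg (by linarith) _
        positivity
      rcases le_total y (s + T/2) with hmid | hmid
      · have := hψle y hsy hym.2
        have h4 : Real.exp (θ*y) * ψ y ≤ G2 y := by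
          simp only [hG2]
          exact mul_le_mul_of_nonneg_right
            (Real.exp_le_exp.mpr (mul_le_mul_of_nonneg_left hmid hθ.le)) (hψ0 y hym)
        linarith
      · have h5 := innerA (p := 2*γ-2) (c := T/2) hθ hs.le hsy (by linarith) (by linarith) (by linarith)
        have : G1 y = Real.exp (θ*y) * (Real.exp (θ*s)/θ * (T/2)^(2*γ-2)) := rfl
        linarith [h5]
  have hEpos : (0:ℝ) < Real.exp (-θ*t) * Real.exp (-θ*s) := by positivity
  have step2 : ∫ y in Icc s t, (G1 y + G2 y)
      ≤ Real.exp (θ*t)/θ * (Real.exp (θ*s)/θ * (T/2)^(2*γ-2))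
        + Real.exp (θ*(s+T/2)) * Rψ := by
    rw [MeasureTheory.integral_add hG1int hG2int]
    have e1 : ∫ y in Icc s t, G1 y ≤ Real.exp (θ*t)/θ * (Real.exp (θ*s)/θ * (T/2)^(2*γ-2)) := by
      simp only [hG1]
      rw [MeasureTheory.integral_mul_const]
      apply mul_le_mul_of_nonneg_right (int_exp_le hθ hst.le)
      have : (0:ℝ) ≤ (T/2)^(2*γ-2) := Real.rpow_nonneg (by linarith) _
      positivity
    have e2 : ∫ y in Icc s t, G2 y ≤ Real.exp (θ*(s+T/2)) * Rψ := by
      simp only [hG2]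
      rw [MeasureTheory.integral_const_mul]
      exact mul_le_mul_of_nonneg_left hψtot (Real.exp_pos _).le
    linarith
  calc Real.exp (-θ*t) * Real.exp (-θ*s) *
      ∫ y in Icc s t, ∫ x in Icc (0:ℝ) s, Real.exp (θ*x) * Real.exp (θ*y) * (y-x)^(2*γ-2)
      ≤ Real.exp (-θ*t) * Real.exp (-θ*s) * ∫ y in Icc s t, (G1 y + G2 y) :=
        mul_le_mul_of_nonneg_left step1 hEpos.le
    _ ≤ Real.exp (-θ*t) * Real.exp (-θ*s) *
        (Real.exp (θ*t)/θ * (Real.exp (θ*s)/θ * (T/2)^(2*γ-2)) + Real.exp (θ*(s+T/2)) * Rψ) :=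
        mul_le_mul_of_nonneg_left step2 hEpos.le
    _ = (T/2)^(2*γ-2)/θ^2 + Real.exp (-(θ*T/2)) * (Real.exp (-(θ*s)) * Rψ) := by
        have c1 : Real.exp (-θ*t) * Real.exp (θ*t) = 1 := by
          rw [← Real.exp_add]; ring_nf; exact Real.exp_zero
        have c2 : Real.exp (-θ*s) * Real.exp (θ*s) = 1 := by
          rw [← Real.exp_add]; ring_nf; exact Real.exp_zero
        have c3 : Real.exp (-θ*t) * Real.exp (-θ*s) * Real.exp (θ*(s+T/2))
            = Real.exp (-(θ*T/2)) * Real.exp (-(θ*s)) := by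
          rw [← Real.exp_add, ← Real.exp_add, ← Real.exp_add]
          congr 1
          simp only [hTdef]; ring
        have p1 : Real.exp (-θ*t) * Real.exp (-θ*s) *
            (Real.exp (θ*t)/θ*(Real.exp (θ*s)/θ*(T/2)^(2*γ-2))) = (T/2)^(2*γ-2)/θ^2 := by
          have h : Real.exp (-θ*t) * Real.exp (-θ*s) *
              (Real.exp (θ*t)/θ*(Real.exp (θ*s)/θ*(T/2)^(2*γ-2)))
              = (Real.exp (-θ*t)*Real.exp (θ*t)) *
                ((Real.exp (-θ*s)*Real.exp (θ*s)) * ((T/2)^(2*γ-2)/θ^2)) := by ring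
          rw [h, c1, c2]; ring
        have p2 : Real.exp (-θ*t) * Real.exp (-θ*s) * (Real.exp (θ*(s+T/2))*Rψ)
            = Real.exp (-(θ*T/2))*(Real.exp (-(θ*s))*Rψ) := by
          have h : Real.exp (-θ*t) * Real.exp (-θ*s) * (Real.exp (θ*(s+T/2))*Rψ)
              = (Real.exp (-θ*t) * Real.exp (-θ*s) * Real.exp (θ*(s+T/2)))*Rψ := by ring
          rw [h, c3]; ring
        rw [mul_add, p1, p2]

lemma case_lt {θ γ : ℝ} (hθ : 0 < θ) (hγ0 : 0 < γ) (hγ : γ < 1/2)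
    {s t : ℝ} (hs : 0 < s) (hst : s < t) (hT : t - s > 2) :
    Real.exp (-θ*t) * Real.exp (-θ*s) *
      ∫ y in Icc s t, ∫ x in Icc (0:ℝ) s,
        Real.exp (θ*x) * Real.exp (θ*y) * (y-x)^(2*γ-2)
    ≤ (4/θ^2 + (96/θ^4)/(2*γ*(1-2*γ))) * (t-s)^(2*γ-2) := by
  have hT0 : (0:ℝ) < t - s := by linarith
  have h12 : (0:ℝ) < 1 - 2*γ := by linarith
  set ψ : ℝ → ℝ := fun y => Real.exp (θ*s) * ((y-s)^(2*γ-1)/(1-2*γ)) with hψ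
  set Rψ : ℝ := Real.exp (θ*s) * ((t-s)^(2*γ)/(2*γ*(1-2*γ))) with hR
  have hψ0 : ∀ y ∈ Icc s t, 0 ≤ ψ y := fun y hy =>
    mul_nonneg (Real.exp_pos _).le
      (div_nonneg (Real.rpow_nonneg (by linarith [hy.1]) _) h12.le)
  have hψint : IntegrableOn ψ (Icc s t) := by
    have hr : IntervalIntegrable (fun u : ℝ => u^(2*γ-1)) volume 0 (t-s) :=
      intervalIntegral.intervalIntegrable_rpow' (by linarith)
    have hr2 : IntervalIntegrable (fun y : ℝ => (y-s)^(2*γ-1)) volume s t := by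
      have := hr.comp_sub_right s
      simpa using this
    have hr3 : IntegrableOn (fun y : ℝ => (y-s)^(2*γ-1)) (Icc s t) :=
      (intervalIntegrable_iff_integrableOn_Icc_of_le hst.le).1 hr2
    exact ((hr3.div_const _).const_mul _)
  have hψle : ∀ y, s < y → y ≤ t →
      (∫ x in Icc (0:ℝ) s, Real.exp (θ*x) * Real.exp (θ*y) * (y-x)^(2*γ-2))
        ≤ Real.exp (θ*y) * ψ y := fun y hy _ => innerB_lt hθ hγ0 hγ hs.le hy
  have hψtot : ∫ y in Icc s t, ψ y ≤ Rψ := by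
    have hval : ∫ y in Icc s t, (y-s)^(2*γ-1) = (t-s)^(2*γ)/(2*γ) := by
      rw [MeasureTheory.integral_Icc_eq_integral_Ioc, ← intervalIntegral.integral_of_le hst.le,
        intervalIntegral.integral_comp_sub_right (fun u : ℝ => u^(2*γ-1)) s,
        integral_rpow (Or.inl (by linarith))]
      rw [show 2*γ-1+1 = 2*γ by ring, show s - s = (0:ℝ) by ring,
        Real.zero_rpow (by positivity)]
      ring
    simp only [hψ, hR]
    rw [MeasureTheory.integral_const_mul, MeasureTheory.integral_div, hval]
    apply le_of_eq
    congr 1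
    rw [div_div]
  have key := main_aux hθ (by linarith) hs hst hT ψ Rψ hψ0 hψint hψle hψtot
  refine key.trans ?_
  have hterm1 : ((t-s)/2)^(2*γ-2)/θ^2 ≤ 4/θ^2 * (t-s)^(2*γ-2) := by
    have := half_rpow_le hT0 (by linarith : (-2:ℝ) ≤ 2*γ-2) (by linarith)
    rw [div_le_iff₀ (by positivity)] at *
    calc ((t-s)/2)^(2*γ-2) ≤ 4*(t-s)^(2*γ-2) := this
      _ = 4/θ^2 * (t-s)^(2*γ-2) * θ^2 := by field_simp
  have hexp1 : Real.exp (-(θ*s)) * Real.exp (θ*s) = 1 := by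
    rw [← Real.exp_add]; simp
  have hterm2 : Real.exp (-(θ*(t-s)/2)) * (Real.exp (-(θ*s)) * Rψ)
      ≤ (96/θ^4)/(2*γ*(1-2*γ)) * (t-s)^(2*γ-2) := by
    have hru : Real.exp (-(θ*s)) * Rψ = (t-s)^(2*γ)/(2*γ*(1-2*γ)) := by
      simp only [hR]
      rw [← mul_assoc, hexp1, one_mul]
    rw [hru]
    have hsplit : (t-s)^(2*γ) = (t-s)^(2*γ-2) * (t-s)^2 := by
      rw [← Real.rpow_natCast (t-s) 2, ← Real.rpow_add hT0]
      norm_num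
    have hsq := exp_sq_le hθ (by linarith : (2:ℝ) ≤ t-s)
    calc Real.exp (-(θ*(t-s)/2)) * ((t-s)^(2*γ)/(2*γ*(1-2*γ)))
        = (Real.exp (-(θ*(t-s)/2)) * (t-s)^2) * ((t-s)^(2*γ-2)/(2*γ*(1-2*γ))) := by
          rw [hsplit]; ring
      _ ≤ (96/θ^4) * ((t-s)^(2*γ-2)/(2*γ*(1-2*γ))) := by
          apply mul_le_mul_of_nonneg_right hsq
          exact div_nonneg (Real.rpow_nonneg hT0.le _) (by positivity)
      _ = (96/θ^4)/(2*γ*(1-2*γ)) * (t-s)^(2*γ-2) := by ring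
  calc ((t-s)/2)^(2*γ-2)/θ^2 + Real.exp (-(θ*(t-s)/2)) * (Real.exp (-(θ*s)) * Rψ)
      ≤ 4/θ^2 * (t-s)^(2*γ-2) + (96/θ^4)/(2*γ*(1-2*γ)) * (t-s)^(2*γ-2) := by
        exact add_le_add hterm1 hterm2
    _ = (4/θ^2 + (96/θ^4)/(2*γ*(1-2*γ))) * (t-s)^(2*γ-2) := by ring

lemma case_gt {θ γ : ℝ} (hθ : 0 < θ) (hγ : 1/2 < γ) (hγ1 : γ < 1)
    {s t : ℝ} (hs : 0 < s) (hst : s < t) (hT : t - s > 2) :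
    Real.exp (-θ*t) * Real.exp (-θ*s) *
      ∫ y in Icc s t, ∫ x in Icc (0:ℝ) s,
        Real.exp (θ*x) * Real.exp (θ*y) * (y-x)^(2*γ-2)
    ≤ (4/θ^2 + ((1/θ)^(2*γ-1) * Real.Gamma (2*γ-1)) * (192/θ^4)) * (t-s)^(2*γ-2) := by
  have hT0 : (0:ℝ) < t - s := by linarith
  set K : ℝ := (1/θ)^(2*γ-1) * Real.Gamma (2*γ-1) with hK
  have hK0 : 0 ≤ K := by
    apply mul_nonneg (Real.rpow_nonneg (by positivity) _)
    exact Real.Gamma_nonneg_of_nonneg (by linarith)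
  set ψ : ℝ → ℝ := fun _ => Real.exp (θ*s) * K with hψ
  set Rψ : ℝ := Real.exp (θ*s) * K * (t-s) with hR
  have hψ0 : ∀ y ∈ Icc s t, 0 ≤ ψ y := fun y _ => mul_nonneg (Real.exp_pos _).le hK0
  have hψint : IntegrableOn ψ (Icc s t) := integrableOn_const measure_Icc_lt_top.ne
  have hψle : ∀ y, s < y → y ≤ t →
      (∫ x in Icc (0:ℝ) s, Real.exp (θ*x) * Real.exp (θ*y) * (y-x)^(2*γ-2))
        ≤ Real.exp (θ*y) * ψ y := fun y hy _ => innerB_gt hθ hγ hγ1 hs.le hy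
  have hψtot : ∫ y in Icc s t, ψ y ≤ Rψ := by
    rw [MeasureTheory.setIntegral_const, Real.volume_real_Icc_of_le hst.le, smul_eq_mul]
    simp only [hR]
    ring_nf
    exact le_refl _
  have key := main_aux hθ hγ1 hs hst hT ψ Rψ hψ0 hψint hψle hψtot
  refine key.trans ?_
  have hterm1 : ((t-s)/2)^(2*γ-2)/θ^2 ≤ 4/θ^2 * (t-s)^(2*γ-2) := by
    have := half_rpow_le hT0 (by linarith : (-2:ℝ) ≤ 2*γ-2) (by linarith)
    rw [div_le_iff₀ (by positivity)]
    calc ((t-s)/2)^(2*γ-2) ≤ 4*(t-s)^(2*γ-2) := this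
      _ = 4/θ^2 * (t-s)^(2*γ-2) * θ^2 := by field_simp
  have hexp1 : Real.exp (-(θ*s)) * Real.exp (θ*s) = 1 := by
    rw [← Real.exp_add]; simp
  have hterm2 : Real.exp (-(θ*(t-s)/2)) * (Real.exp (-(θ*s)) * Rψ)
      ≤ K * (192/θ^4) * (t-s)^(2*γ-2) := by
    have hru : Real.exp (-(θ*s)) * Rψ = K * (t-s) := by
      simp only [hR]
      rw [← mul_assoc, ← mul_assoc, hexp1, one_mul]
    rw [hru]
    have hsplit : (t-s) = (t-s)^(2*γ-2) * (t-s)^(3-2*γ) := by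
      rw [← Real.rpow_add hT0, show 2*γ-2+(3-2*γ) = 1 by ring, Real.rpow_one]
    have h3 : (t-s)^(3-2*γ) ≤ (t-s)^3 := by
      rw [← Real.rpow_natCast (t-s) 3]
      exact Real.rpow_le_rpow_of_exponent_le (by linarith) (by norm_num; linarith)
    have hcu := exp_cube_le hθ (by linarith : (2:ℝ) ≤ t-s)
    have he := Real.exp_pos (-(θ*(t-s)/2))
    calc Real.exp (-(θ*(t-s)/2)) * (K * (t-s))
        = K * (Real.exp (-(θ*(t-s)/2)) * (t-s)^(3-2*γ)) * (t-s)^(2*γ-2) := by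
          have hKs : K*(t-s) = K * ((t-s)^(2*γ-2)*(t-s)^(3-2*γ)) := by rw [← hsplit]
          rw [hKs]; ring
      _ ≤ K * (192/θ^4) * (t-s)^(2*γ-2) := by
          apply mul_le_mul_of_nonneg_right _ (Real.rpow_nonneg hT0.le _)
          apply mul_le_mul_of_nonneg_left _ hK0
          calc Real.exp (-(θ*(t-s)/2)) * (t-s)^(3-2*γ)
              ≤ Real.exp (-(θ*(t-s)/2)) * (t-s)^3 :=
                mul_le_mul_of_nonneg_left h3 he.le
            _ ≤ 192/θ^4 := hcu
  calc ((t-s)/2)^(2*γ-2)/θ^2 + Real.exp (-(θ*(t-s)/2)) * (Real.exp (-(θ*s)) * Rψ)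
      ≤ 4/θ^2 * (t-s)^(2*γ-2) + K * (192/θ^4) * (t-s)^(2*γ-2) :=
        add_le_add hterm1 hterm2
    _ = (4/θ^2 + K * (192/θ^4)) * (t-s)^(2*γ-2) := by ring

theorem stmt_2 (γ θ : ℝ) (hγ0 : 0 < γ) (hγ1 : γ < 1) (hγhalf : γ ≠ 1/2) (hθ : 0 < θ) :
    ∃ C > 0, ∀ s t : ℝ, 0 < s → s < t → t - s > 2 →
      Real.exp (-θ * t) * Real.exp (-θ * s) *
        ∫ y in Icc s t, ∫ x in Icc (0:ℝ) s,
          Real.exp (θ * x) * Real.exp (θ * y) * (y - x) ^ (2 * γ - 2)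
      ≤ C * (t - s) ^ (2 * γ - 2) := by
  rcases lt_or_gt_of_ne hγhalf with h | h
  · refine ⟨4/θ^2 + (96/θ^4)/(2*γ*(1-2*γ)), ?_, ?_⟩
    · have h1 : (0:ℝ) < 4/θ^2 := by positivity
      have h2 : (0:ℝ) < (96/θ^4)/(2*γ*(1-2*γ)) :=
        div_pos (by positivity) (mul_pos (by linarith) (by linarith))
      linarith
    · intro s t hs hst hT
      exact case_lt hθ hγ0 h hs hst hT
  · refine ⟨4/θ^2 + ((1/θ)^(2*γ-1) * Real.Gamma (2*γ-1)) * (192/θ^4), ?_, ?_⟩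
    · have h1 : (0:ℝ) < 4/θ^2 := by positivity
      have h2 : (0:ℝ) ≤ ((1/θ)^(2*γ-1) * Real.Gamma (2*γ-1)) * (192/θ^4) := by
        apply mul_nonneg _ (by positivity)
        exact mul_nonneg (Real.rpow_nonneg (by positivity) _)
          (Real.Gamma_nonneg_of_nonneg (by linarith))
      linarith
    · intro s t hs hst hT
      exact case_gt hθ h hγ1 hs hst hT
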